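/- Let l ≥ 1, let e > 1 be odd, let m = 2^l·e ≥ 4, n = 2^m − 1, and a = 2^{(m+2^l)/2} + 1. Then for every integer k with 1 ≤ k ≤ 2^{(m−2^l)/2} or with 2^m − 2^{(m−2^l)/2} − 1 ≤ k ≤ 2^m − 1, the residue a·k mod n lies in T_{(0,m)}. -/
import Mathlib


open Polynomial

noncomputable def wt2 (a : ℕ) : ℕ := (Nat.digits 2 a).sum

noncomputable def ell (m i : ℕ) : ℕ :=
  sInf {l : ℕ | 0 < l ∧ i * 2 ^ l % (2 ^ m - 1) = i % (2 ^ m - 1)}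

noncomputable def coset (m i : ℕ) : Finset ℕ :=
  (Finset.range (ell m i)).image (fun j => i * 2 ^ j % (2 ^ m - 1))

noncomputable def rho (m i : ℕ) : ℕ := ((coset m i).filter (fun x => x % 2 = 0)).card

noncomputable def vv (m i : ℕ) : ℕ := m * rho m i / ell m i % 2

noncomputable def Tset (m j : ℕ) : Finset ℕ :=
  (Finset.range (2 ^ m - 1)).filter (fun i => vv m i = j)

noncomputable def Nset (m j : ℕ) : Finset ℕ :=
  (Finset.range (2 ^ m - 1)).filter (fun a => a ≠ 0 ∧ wt2 a % 2 = j)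

noncomputable def epsilon (h a : ℕ) : ℕ :=
  if a = 2 ^ h - 1 then 1 else sInf {t : ℕ | 2 ^ h - 1 ≤ 2 ^ t * a}

noncomputable def kappa (h a : ℕ) : ℕ := epsilon h a % 2

noncomputable def leader (m i : ℕ) : ℕ := sInf {x : ℕ | x ∈ coset m i}

noncomputable def uu (m h i : ℕ) : ℕ :=
  if leader m i = 1 then (vv m 1 + h + 1) % 2
  else if leader m i % 2 = 1 ∧ leader m i ≤ 2 ^ h - 1 then
    (kappa h (leader m i) + vv m (leader m i)) % 2
  else vv m (leader m i)

noncomputable def Dset (m h j : ℕ) : Finset ℕ :=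
  (Finset.range (2 ^ m - 1)).filter (fun i => uu m h i = j)

noncomputable def cyclicCode (m : ℕ) (α : GaloisField 2 m) (T : Set ℕ) :
    Submodule (ZMod 2) (Polynomial (ZMod 2)) :=
  Polynomial.degreeLT (ZMod 2) (2 ^ m - 1) ⊓
    ⨅ j ∈ T, LinearMap.ker (Polynomial.aeval (α ^ j)).toLinearMap

def minDistGE (C : Submodule (ZMod 2) (Polynomial (ZMod 2))) (d : ℕ) : Prop :=
  ∀ c ∈ C, c ≠ 0 → d ≤ c.support.card

lemma wt2_eq (x : ℕ) : wt2 x = x % 2 + wt2 (x / 2) := by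
  rcases Nat.eq_zero_or_pos x with h | h
  · simp [h, wt2]
  · rw [wt2, wt2, Nat.digits_def' (by norm_num : 1 < 2) h]
    simp [Nat.add_comm]

lemma wt2_two_mul_add (a b : ℕ) (hb : b < 2) : wt2 (2 * a + b) = b + wt2 a := by
  have h1 : (2*a+b) % 2 = b := by omega
  have h2 : (2*a+b) / 2 = a := by omega
  rw [wt2_eq, h1, h2]

lemma wt2_pow_mul_add (s q r : ℕ) (hr : r < 2^s) : wt2 (2^s * q + r) = wt2 q + wt2 r := by
  induction s generalizing r with
  | zero => interval_cases r <;> simp [wt2]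
  | succ s ih =>
    have hp : (2:ℕ)^(s+1) = 2 * 2^s := by rw [pow_succ]; ring
    rw [hp] at hr
    have h : 2^(s+1) * q + r = 2 * (2^s * q + r/2) + r % 2 := by
      have h2 : 2^(s+1) * q = 2 * (2^s * q) := by rw [hp]; ring
      omega
    rw [h, wt2_two_mul_add _ _ (by omega), ih (r/2) (by omega), wt2_eq r]
    ring

lemma wt2_compl (m : ℕ) : ∀ x ≤ 2^m - 1, wt2 (2^m - 1 - x) + wt2 x = m := by
  induction m with
  | zero => intro x hx; interval_cases x <;> simp [wt2]
  | succ m ih =>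
    intro x hx
    have hP : 0 < (2:ℕ)^m := pow_pos (by norm_num) m
    have hp : (2:ℕ)^(m+1) = 2*2^m := by rw [pow_succ]; ring
    have hx' : x / 2 ≤ 2^m - 1 := by omega
    have h := ih (x/2) hx'
    have h1 : 2^(m+1) - 1 - x = 2 * (2^m - 1 - x/2) + (1 - x % 2) := by omega
    rw [h1, wt2_two_mul_add _ _ (by omega)]
    have h2 : wt2 x = x % 2 + wt2 (x/2) := wt2_eq x
    omega

lemma wt2_eq_sum_bits (m : ℕ) : ∀ x < 2^m, wt2 x = ∑ b ∈ Finset.range m, (x / 2^b) % 2 := by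
  induction m with
  | zero => intro x hx; interval_cases x; simp [wt2]
  | succ m ih =>
    intro x hx
    rw [Finset.sum_range_succ']
    have key : ∀ b ∈ Finset.range m, x / 2^(b+1) % 2 = (x/2) / 2^b % 2 := by
      intro b _
      rw [Nat.div_div_eq_div_mul, ← pow_succ']
    rw [Finset.sum_congr rfl key]
    have hp : (2:ℕ)^(m+1) = 2*2^m := by rw [pow_succ]; ring
    rw [← ih (x/2) (by omega)]
    have h2 : wt2 x = x % 2 + wt2 (x/2) := wt2_eq x
    simp
    omega

lemma rot (m y j : ℕ) (hy : y < 2^m - 1) (hj : j ≤ m) :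
    y * 2^j % (2^m - 1) = y % 2^(m-j) * 2^j + y / 2^(m-j) := by
  set A := (2:ℕ)^j with hAdef
  set B := (2:ℕ)^(m-j) with hBdef
  have hAB : A * B = 2^m := by rw [hAdef, hBdef, ← pow_add]; congr 1; omega
  have hA : 0 < A := pow_pos (by norm_num) _
  have hB : 0 < B := pow_pos (by norm_num) _
  have hy2 : y = B * (y / B) + y % B := (Nat.div_add_mod y B).symm
  set q := y / B with hqdef
  set r := y % B with hrdef
  have hr : r < B := Nat.mod_lt _ hB
  have h2m : y + 2 ≤ A * B := by rw [hAB]; have : 0 < (2:ℕ)^m := pow_pos (by norm_num) _; omega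
  have hq : q < A := by
    have hyAB : y < B * A := by rw [mul_comm, hAB]; omega
    exact Nat.div_lt_of_lt_mul hyAB
  have hlt : q + r * A + 2 ≤ A * B := by
    rcases Nat.lt_or_ge (r+1) B with h | h
    · nlinarith [Nat.mul_le_mul_left A (show r+2 ≤ B by omega)]
    · have hr' : r + 1 = B := by omega
      have h1 : (q+1) * B < A * B := by nlinarith
      have h2 : q + 1 < A := lt_of_mul_lt_mul_right h1 (Nat.zero_le B)
      nlinarith
  have hlt' : r * A + q < 2^m - 1 := by
    have := hlt; rw [hAB] at this; omega
  have hone : (1:ℕ) ≤ 2^m := Nat.one_le_two_pow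
  have hkey : y * A + q = (r * A + q) + 2^m * q := by
    rw [← hAB]; nlinarith [hy2]
  have h1 : y * A = (r * A + q) + (2^m - 1) * q := by
    zify [hone] at hkey ⊢; linarith
  rw [h1, Nat.add_mul_mod_self_left]
  exact Nat.mod_eq_of_lt hlt'

lemma parity (m y j : ℕ) (hy : y < 2^m - 1) (hj1 : 1 ≤ j) (hj : j ≤ m) :
    (y * 2^j % (2^m - 1)) % 2 = (y / 2^(m-j)) % 2 := by
  rw [rot m y j hy hj]
  have h : y % 2^(m-j) * 2^j = (y % 2^(m-j) * 2^(j-1)) * 2 := by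
    have : (2:ℕ)^j = 2^(j-1) * 2 := by rw [← pow_succ]; congr 1; omega
    rw [this]; ring
  omega

lemma parity_sum (m y : ℕ) (hm : 1 ≤ m) (hy : y < 2^m - 1) :
    ∑ j ∈ Finset.range m, (y * 2^j % (2^m-1)) % 2 = wt2 y := by
  obtain ⟨m', rfl⟩ : ∃ m', m = m' + 1 := ⟨m - 1, by omega⟩
  rw [Finset.sum_range_succ']
  have h0 : y * 2^0 % (2^(m'+1) - 1) = y := by
    simpa using Nat.mod_eq_of_lt hy
  have hterm : ∀ j ∈ Finset.range m', (y * 2^(j+1) % (2^(m'+1)-1)) % 2 = (y / 2^(m' - j)) % 2 := by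
    intro j hj
    simp only [Finset.mem_range] at hj
    have := parity (m'+1) y (j+1) hy (by omega) (by omega)
    have heq : m' + 1 - (j+1) = m' - j := by omega
    rw [heq] at this
    exact this
  rw [Finset.sum_congr rfl hterm, h0]
  have hrefl : ∑ j ∈ Finset.range m', y / 2^(m'-j) % 2 = ∑ j ∈ Finset.range m', y / 2^(j+1) % 2 := by
    rw [← Finset.sum_range_reflect]
    apply Finset.sum_congr rfl
    intro j hj
    simp only [Finset.mem_range] at hj
    have h : m' - (m' - 1 - j) = j + 1 := by omega
    rw [h]
  rw [hrefl]
  have hbits := wt2_eq_sum_bits (m'+1) y (by have : 0 < (2:ℕ)^(m'+1) := pow_pos (by norm_num) _; omega)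
  rw [hbits, Finset.sum_range_succ']
  simp

lemma even_count (m y : ℕ) (hm : 1 ≤ m) (hy : y < 2^m - 1) :
    ((Finset.range m).filter (fun j => y*2^j % (2^m-1) % 2 = 0)).card + wt2 y = m := by
  rw [← parity_sum m y hm hy, Finset.card_filter, ← Finset.sum_add_distrib]
  have h1 : ∀ j ∈ Finset.range m,
      ((if y*2^j % (2^m-1) % 2 = 0 then 1 else 0) + y*2^j % (2^m-1) % 2) = 1 := by
    intro j _
    rcases Nat.mod_two_eq_zero_or_one (y*2^j % (2^m-1)) with h|h <;> simp [h]
  rw [Finset.sum_congr rfl h1, Finset.sum_const, Finset.card_range, smul_eq_mul, mul_one]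

lemma mem_S_m (m y : ℕ) : y * 2^m % (2^m - 1) = y % (2^m - 1) := by
  have h : (1:ℕ) ≤ 2^m := Nat.one_le_two_pow
  have h2 : y * 2^m = y + (2^m - 1) * y := by zify [h]; ring
  rw [h2, Nat.add_mul_mod_self_left]

lemma ell_spec (m y : ℕ) (hm : 0 < m) :
    0 < ell m y ∧ y * 2^(ell m y) % (2^m - 1) = y % (2^m - 1) :=
  Nat.sInf_mem (⟨m, hm, mem_S_m m y⟩ :
    Set.Nonempty {l : ℕ | 0 < l ∧ y * 2 ^ l % (2 ^ m - 1) = y % (2 ^ m - 1)})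

lemma ell_le (m y : ℕ) (hm : 0 < m) : ell m y ≤ m := Nat.sInf_le ⟨hm, mem_S_m m y⟩

lemma ell_min (m y l : ℕ) (hl : 0 < l) (h : y*2^l % (2^m-1) = y % (2^m-1)) :
    ell m y ≤ l := Nat.sInf_le ⟨hl, h⟩

lemma shift (m y j l : ℕ) (hy : y < 2^m - 1) (h : y*2^l % (2^m-1) = y % (2^m-1)) :
    y * 2^(j+l) % (2^m-1) = y*2^j % (2^m-1) := by
  have h1 : y * 2^(j+l) = (y * 2^l) * 2^j := by rw [pow_add]; ring
  have hyy : y % (2^m-1) = y := Nat.mod_eq_of_lt hy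
  rw [h1, Nat.mul_mod, h, ← Nat.mul_mod]

lemma shift_mul (m y : ℕ) (hy : y < 2^m - 1)
    (h : y*2^(ell m y) % (2^m-1) = y % (2^m-1)) :
    ∀ c j, y * 2^(j + c * ell m y) % (2^m-1) = y*2^j % (2^m-1) := by
  intro c
  induction c with
  | zero => simp
  | succ c ih =>
    intro j
    have h2 : j + (c+1) * ell m y = (j + ell m y) + c * ell m y := by ring
    rw [h2, ih (j + ell m y), shift m y j (ell m y) hy h]

lemma ell_dvd (m y : ℕ) (hm : 0 < m) (hy : y < 2^m - 1) : ell m y ∣ m := by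
  obtain ⟨hpos, hspec⟩ := ell_spec m y hm
  have hper := shift_mul m y hy hspec
  have hmod : y * 2^(m % ell m y) % (2^m-1) = y % (2^m-1) := by
    have h1 : m % ell m y + (m / ell m y) * ell m y = m := Nat.mod_add_div' m (ell m y)
    calc y * 2^(m % ell m y) % (2^m-1)
        = y * 2^(m % ell m y + (m / ell m y) * ell m y) % (2^m-1) :=
          (hper (m / ell m y) (m % ell m y)).symm
      _ = y % (2^m-1) := by rw [h1]; exact mem_S_m m y
  rcases Nat.eq_zero_or_pos (m % ell m y) with h | h
  · exact Nat.dvd_of_mod_eq_zero h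
  · have h1 := ell_min m y (m % ell m y) h hmod
    have h2 : m % ell m y < ell m y := Nat.mod_lt _ hpos
    omega

lemma f_injOn (m y : ℕ) (hm : 0 < m) (hy : y < 2^m - 1) :
    Set.InjOn (fun j => y * 2^j % (2^m-1)) (Finset.range (ell m y)) := by
  have key : ∀ j j', j < j' → j' < ell m y →
      y * 2^j % (2^m-1) = y * 2^j' % (2^m-1) → False := by
    intro j j' hlt hj' hEq
    set d := j' - j with hd
    have hdpos : 0 < d := by omega
    have hle : y * 2^j ≤ y * 2^j' :=
      Nat.mul_le_mul_left y (Nat.pow_le_pow_right (by norm_num) (by omega))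
    have hdvd1 : (2^m - 1) ∣ y * 2^j' - y * 2^j := (Nat.modEq_iff_dvd' hle).mp hEq
    have h2d : (1:ℕ) ≤ 2^d := Nat.one_le_two_pow
    have heq1 : y * 2^j' - y * 2^j = 2^j * (y * (2^d - 1)) := by
      have hj'' : (2:ℕ)^j' = 2^j * 2^d := by rw [← pow_add]; congr 1; omega
      have hle2 : y*2^j ≤ y*2^j*2^d := Nat.le_mul_of_pos_right _ (by positivity)
      rw [hj'', ← mul_assoc]; zify [h2d, hle2]; ring
    rw [heq1] at hdvd1
    have hodd : Odd (2^m - 1) := by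
      have : Even ((2:ℕ)^m) := by
        rw [Nat.even_pow]; exact ⟨even_two, by omega⟩
      exact Nat.Even.sub_odd Nat.one_le_two_pow this odd_one
    have hcop : Nat.Coprime (2^m - 1) (2^j) :=
      Nat.Coprime.pow_right j (hodd.coprime_two_right)
    have hdvd2 : (2^m - 1) ∣ y * (2^d - 1) := hcop.dvd_of_dvd_mul_left hdvd1
    obtain ⟨c, hc⟩ := hdvd2
    have heq2 : y * 2^d = y + (2^m - 1) * c := by zify [h2d] at hc ⊢; linarith [hc]
    have heq3 : y * 2^d % (2^m - 1) = y % (2^m - 1) := by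
      rw [heq2, Nat.add_mul_mod_self_left]
    have := ell_min m y d hdpos heq3
    omega
  intro j hj j' hj' hEq
  simp only [Finset.coe_range, Set.mem_Iio] at hj hj'
  rcases lt_trichotomy j j' with h | h | h
  · exact absurd hEq (fun hE => key j j' h hj' hE)
  · exact h
  · exact absurd hEq.symm (fun hE => key j' j h hj hE)

lemma rho_eq (m y : ℕ) (hm : 0 < m) (hy : y < 2^m-1) :
    rho m y = ((Finset.range (ell m y)).filter (fun j => y*2^j % (2^m-1) % 2 = 0)).card := by
  rw [rho, coset, Finset.filter_image]
  apply Finset.card_image_of_injOn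
  exact (f_injOn m y hm hy).mono (by exact_mod_cast Finset.filter_subset _ _)

lemma sum_periodic (c : ℕ) (g : ℕ → ℕ) (hper : ∀ q j, g (j + q * c) = g j) :
    ∀ d, ∑ j ∈ Finset.range (d * c), g j = d * ∑ j ∈ Finset.range c, g j := by
  intro d
  induction d with
  | zero => simp
  | succ d ih =>
    have h : (d+1)*c = d*c + c := by ring
    rw [h, ← Finset.sum_range_add_sum_Ico g (show d*c ≤ d*c + c by omega), ih,
      Finset.sum_Ico_eq_sum_range]
    have h2 : ∀ i ∈ Finset.range (d*c + c - d*c), g (d*c + i) = g i := by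
      intro i _
      rw [add_comm, hper]
    rw [Finset.sum_congr rfl h2]
    have h3 : d*c + c - d*c = c := by omega
    rw [h3]; ring

lemma count_m (m y : ℕ) (hm : 0 < m) (hy : y < 2^m-1) :
    ((Finset.range m).filter (fun j => y*2^j % (2^m-1) % 2 = 0)).card
      = (m / ell m y) * ((Finset.range (ell m y)).filter (fun j => y*2^j%(2^m-1)%2 = 0)).card := by
  obtain ⟨hLpos, hspec⟩ := ell_spec m y hm
  have hper := shift_mul m y hy hspec
  set g : ℕ → ℕ := fun j => if y*2^j % (2^m-1) % 2 = 0 then 1 else 0 with hg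
  have hgper : ∀ q j, g (j + q * ell m y) = g j := by
    intro q j; simp only [hg, hper q j]
  have h1 : m = (m / ell m y) * ell m y := (Nat.div_mul_cancel (ell_dvd m y hm hy)).symm
  rw [Finset.card_filter, Finset.card_filter]
  calc ∑ j ∈ Finset.range m, g j = ∑ j ∈ Finset.range ((m / ell m y) * ell m y), g j := by rw [← h1]
    _ = (m / ell m y) * ∑ j ∈ Finset.range (ell m y), g j :=
        sum_periodic (ell m y) g hgper (m / ell m y)

lemma vv_zero (m y : ℕ) (hm : 0 < m) (hme : m % 2 = 0) (hy : y < 2^m - 1)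
    (hwt : wt2 y % 2 = 0) : vv m y = 0 := by
  obtain ⟨hLpos, hspec⟩ := ell_spec m y hm
  obtain ⟨c, hc⟩ := ell_dvd m y hm hy
  have hrho := rho_eq m y hm hy
  have hcnt := count_m m y hm hy
  have hec := even_count m y hm hy
  set L := ell m y with hLdef
  set R := rho m y with hRdef
  have hcdiv : m / L = c := by rw [hc]; exact Nat.mul_div_cancel_left c hLpos
  have h1 : m * R / L = c * R := by
    rw [hc, mul_assoc]
    exact Nat.mul_div_cancel_left _ hLpos
  rw [vv, ← hRdef, ← hLdef, h1]
  rw [← hrho, hcdiv] at hcnt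
  omega

lemma wt2_ak (s t m k : ℕ) (hst : s + t = m) (hts : t < s) (ht : 1 ≤ t)
    (hk : k ≤ 2^t) : wt2 ((2^s + 1) * k % (2^m - 1)) % 2 = 0 := by
  have hpow : (2:ℕ)^s * 2^t = 2^m := by rw [← pow_add, hst]
  have hs2 : (2:ℕ)^t < 2^s := Nat.pow_lt_pow_right (by norm_num) hts
  have h1t : (1:ℕ) < 2^t := Nat.one_lt_two_pow (by omega)
  rcases eq_or_lt_of_le hk with rfl | hk'
  · have h1 : (2^s + 1) * 2^t = (2^t + 1) + (2^m - 1) * 1 := by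
      have h2 : (2:ℕ)^m ≥ 1 := Nat.one_le_two_pow
      have h3 : (2^s + 1) * 2^t = 2^m + 2^t := by rw [← hpow]; ring
      omega
    rw [h1, Nat.add_mul_mod_self_left]
    have hlt : 2^t + 1 < 2^m - 1 := by nlinarith
    rw [Nat.mod_eq_of_lt hlt]
    have : (2:ℕ)^t + 1 = 2^t * 1 + 1 := by ring
    rw [this, wt2_pow_mul_add t 1 1 h1t]
    simp [wt2]
  · have hlt : (2^s + 1) * k < 2^m - 1 := by
      have h2 : (2^s + 1) * k = 2^s * k + k := by ring
      have h3 : 2^s * k ≤ 2^s * (2^t - 1) := Nat.mul_le_mul_left _ (by omega)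
      have h4 : 2^s * (2^t - 1) = 2^m - 2^s := by
        rw [Nat.mul_sub, hpow, mul_one]
      have hsm : (2:ℕ)^s ≤ 2^m := by nlinarith
      omega
    rw [Nat.mod_eq_of_lt hlt]
    have h2 : (2^s + 1) * k = 2^s * k + k := by ring
    rw [h2, wt2_pow_mul_add s k k (by omega)]
    omega


theorem stmt8 (l e m : ℕ) (hl : 1 ≤ l) (he : Odd e) (he1 : 1 < e)
    (hm : m = 2 ^ l * e) (hm4 : 4 ≤ m) (k : ℕ)
    (hk : (1 ≤ k ∧ k ≤ 2 ^ ((m - 2 ^ l) / 2)) ∨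
      (2 ^ m - 2 ^ ((m - 2 ^ l) / 2) - 1 ≤ k ∧ k ≤ 2 ^ m - 1)) :
    (2 ^ ((m + 2 ^ l) / 2) + 1) * k % (2 ^ m - 1) ∈ Tset m 0 := by
  obtain ⟨e', he'⟩ := he
  have he'1 : 1 ≤ e' := by omega
  have hP2 : 2 ≤ 2^l := by
    calc (2:ℕ) = 2^1 := by norm_num
    _ ≤ 2^l := Nat.pow_le_pow_right (by norm_num) hl
  have hA : (2:ℕ)^l = 2 * 2^(l-1) := by
    rw [← pow_succ']; congr 1; omega
  have hB1 : 2 ≤ 2^l * e' := by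
    calc 2 = 2 * 1 := by norm_num
    _ ≤ 2^l * e' := Nat.mul_le_mul hP2 he'1
  have hmB : m = 2 * (2^l * e') + 2^l := by rw [hm, he']; ring
  have ht : (m - 2^l) / 2 = 2^l * e' := by omega
  have hs : (m + 2^l) / 2 = 2^l * e' + 2^l := by omega
  set t := 2^l * e' with htdef
  set s := 2^l * e' + 2^l with hsdef
  have hst : s + t = m := by omega
  have hts : t < s := by omega
  have ht1 : 1 ≤ t := by omega
  have hme : m % 2 = 0 := by omega
  have hmpos : 0 < m := by omega
  have hn : 0 < 2^m - 1 := by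
    have h16 : (2:ℕ)^4 ≤ 2^m := Nat.pow_le_pow_right (by norm_num) hm4
    have : (16:ℕ) ≤ 2^m := by norm_num at h16 ⊢; omega
    omega
  rw [ht] at hk
  rw [hs]
  rw [Tset, Finset.mem_filter, Finset.mem_range]
  refine ⟨Nat.mod_lt _ hn, ?_⟩
  apply vv_zero m _ hmpos hme (Nat.mod_lt _ hn)
  rcases hk with ⟨_, hk2⟩ | ⟨hk1, hk2⟩
  · exact wt2_ak s t m k hst hts ht1 hk2
  · set n := 2^m - 1 with hndef
    set a := 2^s + 1 with hadef
    set k' := n - k with hk'def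
    have h2tm : 2^t < 2^m := Nat.pow_lt_pow_right (by norm_num) (by omega)
    have hkk' : k + k' = n := by omega
    have hk'le : k' ≤ 2^t := by omega
    have hr := wt2_ak s t m k' hst hts ht1 hk'le
    set x := a * k % n with hxdef
    set r := a * k' % n with hrdef
    have hx : x < n := Nat.mod_lt _ hn
    have hr' : r < n := Nat.mod_lt _ hn
    have hxr : (x + r) % n = 0 := by
      rw [hxdef, hrdef, ← Nat.add_mod, ← Nat.mul_add, hkk', Nat.mul_mod_left]
    obtain ⟨c, hc⟩ := Nat.dvd_of_mod_eq_zero hxr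
    have hc2 : c < 2 := by
      by_contra hcon
      push_neg at hcon
      have : n * 2 ≤ n * c := Nat.mul_le_mul_left n hcon
      omega
    interval_cases c
    · have hx0 : x = 0 := by omega
      rw [hx0]; simp [wt2]
    · have hxeq : x = 2^m - 1 - r := by omega
      have hcompl := wt2_compl m r (by omega)
      rw [hxeq]
      have hwtr : wt2 r ≤ m := by omega
      have hec := even_count m r hmpos (by omega)
      omega
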